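/- Two nontrivial cyclic words w and u satisfy f_w(v) = f_u(v) for all freely reduced words v if and only if w and u are positive powers of a common cyclic word. -/

import Mathlib

open Finset
noncomputable section
attribute [local instance] Classical.propDecidable

abbrev Letter (k : ℕ) := Fin k × Bool

def linv {k : ℕ} (x : Letter k) : Letter k := (x.1, !x.2)

/-- `w` is a freely reduced word: no letter is followed by its inverse. -/
def Reduced {k : ℕ} (w : List (Letter k)) : Prop :=
  ∀ i < w.length, w[i + 1]? ≠ (w[i]?).map linv

/-- `w` is cyclically reduced. -/
def CyclRed {k : ℕ} (w : List (Letter k)) : Prop := Reduced (w ++ w)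

/-- `w` and `w'` define the same cyclic word. -/
def CyclEq {k : ℕ} (w w' : List (Letter k)) : Prop := ∃ n, w' = w.rotate n

/-- the word `u` occurs in the cyclic word of `w` starting at position `i` (with wrap-around). -/
def occursAt {k : ℕ} (w u : List (Letter k)) (i : ℕ) : Prop :=
  ∀ j < u.length, w[(i + j) % w.length]? = u[j]?

/-- the number `n_w(u)` of cyclic occurrences of `u` in the cyclic word `w`. -/
def cyclCount {k : ℕ} (w u : List (Letter k)) : ℕ :=
  ((Finset.range w.length).filter (occursAt w u)).card

/-- the frequency `f_w(u) = n_w(u)/‖w‖`. -/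
def freq {k : ℕ} (w u : List (Letter k)) : ℚ := (cyclCount w u : ℚ) / (w.length : ℚ)

namespace Stmt3Aux

lemma per_mul {α : Type*} (f : ℕ → α) (p : ℕ) (hp : ∀ j, f (j + p) = f j) :
    ∀ m j, f (j + p * m) = f j := by
  intro m
  induction m with
  | zero => simp
  | succ m ih =>
    intro j
    rw [Nat.mul_succ, ← Nat.add_assoc, hp, ih]

lemma per_gcd {α : Type*} (f : ℕ → α) :
    ∀ p q : ℕ, (∀ j, f (j + p) = f j) → (∀ j, f (j + q) = f j) →
      ∀ j, f (j + Nat.gcd p q) = f j := by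
  intro p q
  induction p, q using Nat.gcd.induction with
  | H0 q => simpa using fun _ h => h
  | H1 p q hp ih =>
    intro h1 h2 j
    rw [Nat.gcd_rec]
    refine ih ?_ h1 j
    intro j'
    have h3 : f (j' + q % p + p * (q / p)) = f (j' + q % p) := per_mul f p h1 _ _
    rw [Nat.add_assoc, Nat.mod_add_div] at h3
    exact h3.symm.trans (h2 j')

lemma per_mod {α : Type*} (f : ℕ → α) (g : ℕ)
    (h : ∀ j, f (j + g) = f j) (m : ℕ) : f m = f (m % g) := by
  conv_lhs => rw [← Nat.mod_add_div m g]
  exact per_mul f g h (m / g) (m % g)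

lemma mulgb_div (a b g : ℕ) (hg : 0 < g) (hb : b < g) : (a * g + b) / g = a := by
  rw [mul_comm, Nat.mul_add_div hg, Nat.div_eq_of_lt hb]
  omega

lemma mulgb_mod (a b g : ℕ) (hb : b < g) : (a * g + b) % g = b := by
  rw [mul_comm, Nat.mul_add_mod, Nat.mod_eq_of_lt hb]

lemma card_filter_mod (Q : ℕ → Prop) (s g : ℕ) (hg : 0 < g) :
    ((Finset.range (s * g)).filter (fun i => Q (i % g))).card
      = s * ((Finset.range g).filter Q).card := by
  rw [show s * ((Finset.range g).filter Q).card
      = ((Finset.range s) ×ˢ ((Finset.range g).filter Q)).card by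
    rw [Finset.card_product, Finset.card_range]]
  apply Finset.card_nbij' (fun i => (i / g, i % g)) (fun p => p.1 * g + p.2)
  · intro a ha
    simp only [Finset.mem_coe, Finset.mem_filter, Finset.mem_range, Finset.mem_product] at ha ⊢
    exact ⟨Nat.div_lt_of_lt_mul (by rw [mul_comm s g] at ha; exact ha.1), Nat.mod_lt _ hg, ha.2⟩
  · intro p hp
    simp only [Finset.mem_coe, Finset.mem_filter, Finset.mem_range, Finset.mem_product] at hp ⊢
    refine ⟨?_, by rw [mulgb_mod _ _ _ hp.2.1]; exact hp.2.2⟩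
    calc p.1 * g + p.2 < p.1 * g + g := by omega
      _ = (p.1 + 1) * g := by ring
      _ ≤ s * g := Nat.mul_le_mul_right _ (by have := hp.1; omega)
  · intro a ha
    simp only
    rw [mul_comm]
    exact Nat.div_add_mod a g
  · intro p hp
    simp only [Finset.mem_coe, Finset.mem_filter, Finset.mem_range, Finset.mem_product] at hp
    have := hp.2.1
    ext <;> simp only <;> [rw [mulgb_div _ _ _ hg this]; rw [mulgb_mod _ _ _ this]]


variable {k : ℕ}

lemma occursAt_congr {w v : List (Letter k)} {i i' : ℕ}
    (h : i % w.length = i' % w.length) : occursAt w v i ↔ occursAt w v i' := by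
  unfold occursAt
  refine forall_congr' fun j => forall_congr' fun hj => ?_
  rw [show (i + j) % w.length = (i' + j) % w.length by
    rw [← Nat.mod_add_mod, h, Nat.mod_add_mod]]

lemma occursAt_rotate {l v : List (Letter k)} {n i : ℕ} (hl : l ≠ []) :
    occursAt (l.rotate n) v i ↔ occursAt l v (i + n) := by
  have hp : 0 < l.length := List.length_pos_iff.2 hl
  unfold occursAt
  rw [List.length_rotate]
  refine forall_congr' fun j => forall_congr' fun hj => ?_
  rw [List.getElem?_rotate (Nat.mod_lt _ hp), Nat.mod_add_mod, Nat.add_right_comm]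

lemma cyclCount_rotate (l v : List (Letter k)) (n : ℕ) (hl : l ≠ []) :
    cyclCount (l.rotate n) v = cyclCount l v := by
  have hp : 0 < l.length := List.length_pos_iff.2 hl
  set p := l.length with hpdef
  have harith : ∀ m : ℕ, (m + (p - n % p) + n) % p = m % p := by
    intro m
    have h1 := Nat.mod_add_div n p
    have h2 := Nat.mod_lt n hp
    rw [show m + (p - n % p) + n = m + p * (n / p) + p by omega,
      Nat.add_mod_right, Nat.add_mul_mod_self_left]
  unfold cyclCount
  rw [List.length_rotate]
  apply Finset.card_nbij' (fun i => (i + n) % p) (fun i => (i + (p - n % p)) % p)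
  · intro a ha
    simp only [Finset.mem_coe, Finset.mem_filter, Finset.mem_range] at ha ⊢
    refine ⟨Nat.mod_lt _ hp, ?_⟩
    rw [occursAt_congr (i := (a + n) % p) (i' := a + n) (by
      show (a + n) % l.length % l.length = (a + n) % l.length
      exact Nat.mod_mod_of_dvd _ dvd_rfl)]
    exact (occursAt_rotate hl).1 ha.2
  · intro b hb
    simp only [Finset.mem_coe, Finset.mem_filter, Finset.mem_range] at hb ⊢
    refine ⟨Nat.mod_lt _ hp, ?_⟩
    rw [occursAt_rotate hl]
    rw [occursAt_congr (i := (b + (p - n % p)) % p + n) (i' := b) (by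
      show ((b + (p - n % p)) % p + n) % l.length = b % l.length
      rw [Nat.mod_add_mod]; exact harith b)]
    exact hb.2
  · intro a ha
    simp only [Finset.mem_coe, Finset.mem_filter, Finset.mem_range] at ha
    beta_reduce
    rw [Nat.mod_add_mod, show a + n + (p - n % p) = a + (p - n % p) + n by omega,
      harith a, Nat.mod_eq_of_lt ha.1]
  · intro b hb
    simp only [Finset.mem_coe, Finset.mem_filter, Finset.mem_range] at hb
    beta_reduce
    rw [Nat.mod_add_mod, harith b, Nat.mod_eq_of_lt hb.1]

lemma freq_rotate (l v : List (Letter k)) (n : ℕ) (hl : l ≠ []) :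
    freq (l.rotate n) v = freq l v := by
  unfold freq
  rw [cyclCount_rotate _ _ _ hl, List.length_rotate]

lemma flatten_replicate_length (s : ℕ) (z : List (Letter k)) :
    (List.replicate s z).flatten.length = s * z.length := by
  induction s with
  | zero => simp
  | succ s ih =>
    rw [List.replicate_succ, List.flatten_cons, List.length_append, ih]
    ring

lemma flatten_replicate_getElem? (s : ℕ) (z : List (Letter k)) (m : ℕ)
    (hm : m < s * z.length) :
    (List.replicate s z).flatten[m]? = z[m % z.length]? := by
  induction s generalizing m with
  | zero => omega
  | succ s ih =>
    rw [List.replicate_succ, List.flatten_cons]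
    by_cases h : m < z.length
    · rw [List.getElem?_append_left h, Nat.mod_eq_of_lt h]
    · rw [List.getElem?_append_right (le_of_not_gt h),
        ih _ (by rw [Nat.succ_mul] at hm; omega),
        ← Nat.mod_eq_sub_mod (le_of_not_gt h)]

lemma occursAt_flatten (s : ℕ) (z v : List (Letter k)) (hz : z ≠ []) (hs : 0 < s) (i : ℕ) :
    occursAt (List.replicate s z).flatten v i ↔ occursAt z v (i % z.length) := by
  have hg : 0 < z.length := List.length_pos_iff.2 hz
  have hsg : 0 < s * z.length := by positivity
  unfold occursAt
  rw [flatten_replicate_length]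
  refine forall_congr' fun j => forall_congr' fun hj => ?_
  rw [flatten_replicate_getElem? s z _ (Nat.mod_lt _ hsg),
    Nat.mod_mod_of_dvd _ ⟨s, mul_comm s z.length⟩, Nat.mod_add_mod]

lemma cyclCount_flatten (s : ℕ) (z v : List (Letter k)) (hz : z ≠ []) (hs : 0 < s) :
    cyclCount (List.replicate s z).flatten v = s * cyclCount z v := by
  have hg : 0 < z.length := List.length_pos_iff.2 hz
  unfold cyclCount
  rw [flatten_replicate_length, ← card_filter_mod (occursAt z v) s z.length hg]
  congr 1
  apply Finset.filter_congr
  intro i _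
  exact occursAt_flatten s z v hz hs i

lemma freq_flatten (s : ℕ) (z v : List (Letter k)) (hz : z ≠ []) (hs : 0 < s) :
    freq (List.replicate s z).flatten v = freq z v := by
  have hg : 0 < z.length := List.length_pos_iff.2 hz
  unfold freq
  rw [cyclCount_flatten s z v hz hs, flatten_replicate_length]
  push_cast
  rw [mul_div_mul_left _ _ (by exact_mod_cast hs.ne' : (s : ℚ) ≠ 0)]

lemma cyclRed_step {u : List (Letter k)} (hu : CyclRed u) (hune : u ≠ []) (m : ℕ) :
    u[(m + 1) % u.length]? ≠ (u[m % u.length]?).map linv := by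
  have hq : 0 < u.length := List.length_pos_iff.2 hune
  have h := hu (m % u.length) (by rw [List.length_append]; have := Nat.mod_lt m hq; omega)
  have e1 : (u ++ u)[m % u.length]? = u[m % u.length]? :=
    List.getElem?_append_left (Nat.mod_lt _ hq)
  have e2 : (u ++ u)[m % u.length + 1]? = u[(m + 1) % u.length]? := by
    by_cases hlt : m % u.length + 1 < u.length
    · rw [List.getElem?_append_left hlt, ← Nat.mod_add_mod, Nat.mod_eq_of_lt hlt]
    · have hq1 : m % u.length + 1 = u.length := by have := Nat.mod_lt m hq; omega
      rw [List.getElem?_append_right (le_of_eq hq1.symm)]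
      rw [show m % u.length + 1 - u.length = 0 by omega]
      rw [show (m + 1) % u.length = 0 by rw [← Nat.mod_add_mod, hq1, Nat.mod_self]]
  rw [e1, e2] at h
  exact h

lemma forward {k : ℕ} (w u : List (Letter k)) (hu : CyclRed u) (hwne : w ≠ []) (hune : u ≠ [])
    (hfreq : ∀ v : List (Letter k), Reduced v → freq w v = freq u v) :
    ∃ (z : List (Letter k)) (s t : ℕ), CyclRed z ∧ z ≠ [] ∧ 1 ≤ s ∧ 1 ≤ t ∧
      CyclEq (List.replicate s z).flatten w ∧ CyclEq (List.replicate t z).flatten u := by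
  have hp : 0 < w.length := List.length_pos_iff.2 hwne
  have hq : 0 < u.length := List.length_pos_iff.2 hune
  set vv : ℕ → List (Letter k) :=
    fun L => (List.range L).map (fun j => u[j % u.length]'(Nat.mod_lt _ hq)) with hvv
  have hvlen : ∀ L, (vv L).length = L := by intro L; rw [hvv]; simp
  have hvget : ∀ L j, j < L → (vv L)[j]? = u[j % u.length]? := by
    intro L j hj
    rw [hvv]
    simp only [List.getElem?_map, List.getElem?_range hj, Option.map_some]
    rw [List.getElem?_eq_getElem (Nat.mod_lt _ hq)]
  have hvnone : ∀ L j, L ≤ j → (vv L)[j]? = none := by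
    intro L j hj; apply List.getElem?_eq_none; rw [hvlen]; exact hj
  have hred : ∀ L, Reduced (vv L) := by
    intro L m hm
    rw [hvlen] at hm
    rw [hvget L m hm]
    by_cases h1 : m + 1 < L
    · rw [hvget L (m+1) h1]
      exact cyclRed_step hu hune m
    · rw [hvnone L (m+1) (by omega)]
      rw [List.getElem?_eq_getElem (Nat.mod_lt _ hq)]
      simp
  have hoccw : ∀ L, ∃ i < w.length, ∀ j < L, w[(i + j) % w.length]? = u[j % u.length]? := by
    intro L
    have h0 : occursAt u (vv L) 0 := by
      intro j hj
      rw [hvlen] at hj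
      rw [hvget L j hj, Nat.zero_add]
    have h1 : 0 < cyclCount u (vv L) :=
      Finset.card_pos.2 ⟨0, Finset.mem_filter.2 ⟨Finset.mem_range.2 hq, h0⟩⟩
    have h2 : 0 < freq u (vv L) :=
      div_pos (by exact_mod_cast h1) (by exact_mod_cast hq)
    rw [← hfreq _ (hred L)] at h2
    have h3 : 0 < cyclCount w (vv L) := by
      by_contra h
      push_neg at h
      rw [Nat.le_zero] at h
      unfold freq at h2
      rw [h] at h2
      simp at h2
    obtain ⟨i, hi⟩ := Finset.card_pos.1 h3
    rw [Finset.mem_filter, Finset.mem_range] at hi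
    refine ⟨i, hi.1, fun j hj => ?_⟩
    have h4 := hi.2 j (by rw [hvlen]; exact hj)
    rwa [hvget L j hj] at h4
  have key : ∃ i < w.length, ∀ j, w[(i + j) % w.length]? = u[j % u.length]? := by
    by_contra hcon
    push_neg at hcon
    choose Jf hJf using hcon
    obtain ⟨i, hi, hP⟩ := hoccw (((Finset.range w.length).sup
      (fun i => if h : i < w.length then Jf i h else 0)) + 1)
    refine hJf i hi (hP (Jf i hi) ?_)
    have hle := Finset.le_sup (f := fun i => if h : i < w.length then Jf i h else 0)
      (Finset.mem_range.2 hi)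
    simp only [dif_pos hi] at hle
    omega
  obtain ⟨i, hip, H⟩ := key
  set g := Nat.gcd w.length u.length with hgdef
  have hg : 0 < g := Nat.gcd_pos_of_pos_left _ hp
  have hgq : g ≤ u.length := Nat.le_of_dvd hq (Nat.gcd_dvd_right _ _)
  have hgp : g ≤ w.length := Nat.le_of_dvd hp (Nat.gcd_dvd_left _ _)
  set f : ℕ → Option (Letter k) := fun m => u[m % u.length]? with hf
  have hfq : ∀ j, f (j + u.length) = f j := by
    intro j; rw [hf]; simp only [Nat.add_mod_right]
  have hfp : ∀ j, f (j + w.length) = f j := by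
    intro j
    rw [hf]
    simp only
    calc u[(j + w.length) % u.length]?
        = w[(i + (j + w.length)) % w.length]? := (H (j + w.length)).symm
      _ = w[(i + j) % w.length]? := by rw [← Nat.add_assoc, Nat.add_mod_right]
      _ = u[j % u.length]? := H j
  have hfg : ∀ j, f (j + g) = f j := per_gcd f _ _ hfp hfq
  have hfmod : ∀ m, f m = f (m % g) := per_mod f g hfg
  set z := u.take g with hz
  have hzlen : z.length = g := by rw [hz, List.length_take]; omega
  have hzne : z ≠ [] := by rw [← List.length_pos_iff, hzlen]; exact hg
  have hu_mod : ∀ m, u[m % u.length]? = z[m % g]? := by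
    intro m
    have h1 := hfmod m
    rw [hf] at h1
    simp only at h1
    rw [Nat.mod_eq_of_lt (lt_of_lt_of_le (Nat.mod_lt _ hg) hgq)] at h1
    rw [h1, hz, List.getElem?_take_of_lt (Nat.mod_lt _ hg)]
  have hw_mod : ∀ m, w[(i + m) % w.length]? = z[m % g]? := fun m => (H m).trans (hu_mod m)
  have hzz : ∀ m, m < 2 * g → (z ++ z)[m]? = u[m % u.length]? := by
    intro m hm
    rw [hu_mod m]
    by_cases h : m < g
    · rw [List.getElem?_append_left (by rw [hzlen]; exact h), Nat.mod_eq_of_lt h]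
    · rw [List.getElem?_append_right (by rw [hzlen]; omega), hzlen,
        Nat.mod_eq_sub_mod (le_of_not_gt h), Nat.mod_eq_of_lt (by omega)]
  have hzred : CyclRed z := by
    intro m hm
    rw [List.length_append, hzlen] at hm
    rw [hzz m (by omega)]
    by_cases h1 : m + 1 < 2 * g
    · rw [hzz (m+1) h1]
      exact cyclRed_step hu hune m
    · rw [List.getElem?_eq_none (l := z ++ z) (by rw [List.length_append, hzlen]; omega)]
      rw [List.getElem?_eq_getElem (Nat.mod_lt _ hq)]
      simp
  have hgp' : g ∣ w.length := Nat.gcd_dvd_left _ _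
  have hgq' : g ∣ u.length := Nat.gcd_dvd_right _ _
  have hsg : (w.length / g) * z.length = w.length := by
    rw [hzlen]; exact Nat.div_mul_cancel hgp'
  have htg : (u.length / g) * z.length = u.length := by
    rw [hzlen]; exact Nat.div_mul_cancel hgq'
  have hflatw : (List.replicate (w.length / g) z).flatten = w.rotate i := by
    apply List.ext_getElem?
    intro m
    by_cases hm : m < w.length
    · rw [flatten_replicate_getElem? _ _ _ (by rw [hsg]; exact hm), hzlen,
        List.getElem?_rotate hm, Nat.add_comm m i, ← hw_mod m]
    · rw [List.getElem?_eq_none (by rw [flatten_replicate_length, hsg]; omega),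
        List.getElem?_eq_none (by rw [List.length_rotate]; omega)]
  have hflatu : (List.replicate (u.length / g) z).flatten = u := by
    apply List.ext_getElem?
    intro m
    by_cases hm : m < u.length
    · rw [flatten_replicate_getElem? _ _ _ (by rw [htg]; exact hm), hzlen]
      have h5 := hu_mod m
      rw [Nat.mod_eq_of_lt hm] at h5
      exact h5.symm
    · rw [List.getElem?_eq_none (by rw [flatten_replicate_length, htg]; omega),
        List.getElem?_eq_none (by omega)]
  refine ⟨z, w.length / g, u.length / g, hzred, hzne, Nat.div_pos hgp hg, Nat.div_pos hgq hg,
    ⟨w.length - i, ?_⟩, ⟨0, by rw [List.rotate_zero]; exact hflatu.symm⟩⟩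
  rw [hflatw, List.rotate_rotate, show i + (w.length - i) = w.length by omega,
    List.rotate_length]

lemma backward {k : ℕ} (w u : List (Letter k))
    (z : List (Letter k)) (s t : ℕ) (hzne : z ≠ []) (hs : 1 ≤ s) (ht : 1 ≤ t)
    (h1 : CyclEq (List.replicate s z).flatten w) (h2 : CyclEq (List.replicate t z).flatten u) :
    ∀ v : List (Letter k), freq w v = freq u v := by
  obtain ⟨n1, hn1⟩ := h1
  obtain ⟨n2, hn2⟩ := h2
  intro v
  have hfne : ∀ m : ℕ, 1 ≤ m → (List.replicate m z).flatten ≠ [] := by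
    intro m hm
    rw [← List.length_pos_iff, flatten_replicate_length]
    exact Nat.mul_pos hm (List.length_pos_iff.2 hzne)
  rw [hn1, hn2, freq_rotate _ _ _ (hfne s hs), freq_rotate _ _ _ (hfne t ht),
    freq_flatten s z v hzne hs, freq_flatten t z v hzne ht]

end Stmt3Aux

theorem stmt3 (k : ℕ) (hk : 2 ≤ k) (w u : List (Letter k))
    (hw : CyclRed w) (hwne : w ≠ []) (hu : CyclRed u) (hune : u ≠ []) :
    (∀ v : List (Letter k), Reduced v → freq w v = freq u v) ↔
      ∃ (z : List (Letter k)) (s t : ℕ), CyclRed z ∧ z ≠ [] ∧ 1 ≤ s ∧ 1 ≤ t ∧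
        CyclEq (List.replicate s z).flatten w ∧ CyclEq (List.replicate t z).flatten u := by
  constructor
  · intro hfreq
    exact Stmt3Aux.forward w u hu hwne hune hfreq
  · rintro ⟨z, s, t, hz, hzne, hs, ht, h1, h2⟩ v _
    exact Stmt3Aux.backward w u z s t hzne hs ht h1 h2 v


end
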